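/- For any finite graph G with at least one vertex, the domination polynomial P_G(z) = Σ_{S dominating} z^{|S|} satisfies P_G(1) equal to the total number of dominating sets, and P_G(1) is odd. -/

import Mathlib

/-- `S` is a dominating set: every vertex is in `S` or adjacent to a member of `S`. -/
def IsDomSet {V : Type*} (G : SimpleGraph V) (S : Finset V) : Prop :=
  ∀ v, v ∈ S ∨ ∃ u ∈ S, G.Adj u v

instance {V : Type*} [Fintype V] [DecidableEq V] (G : SimpleGraph V)
    [DecidableRel G.Adj] : DecidablePred (IsDomSet G) :=
  fun _ => inferInstanceAs (Decidable (∀ _, _ ∨ _))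


open Finset in
private lemma dom_card_odd {V : Type*} [Fintype V] [DecidableEq V]
    (G : SimpleGraph V) [DecidableRel G.Adj] :
    Odd (Finset.univ.filter (IsDomSet G)).card := by
  classical
  set f : Finset V → Finset V → ZMod 2 :=
    fun A B => if ∀ a ∈ A, ∀ b ∈ B, a ≠ b ∧ ¬ G.Adj a b then 1 else 0 with hf
  have hsymm : ∀ A B, f A B = f B A := by
    intro A B
    have h : (∀ a ∈ A, ∀ b ∈ B, a ≠ b ∧ ¬ G.Adj a b) ↔
        (∀ a ∈ B, ∀ b ∈ A, a ≠ b ∧ ¬ G.Adj a b) := by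
      constructor <;> intro h b hb a ha <;>
        exact ⟨(h a ha b hb).1.symm, fun hadj => (h a ha b hb).2 hadj.symm⟩
    simp only [hf, h]
  -- the swap-symmetric pair count is 1 mod 2
  have hpair : ∑ p ∈ (univ ×ˢ univ : Finset (Finset V × Finset V)), f p.1 p.2 = 1 := by
    have h0 : ((∅, ∅) : Finset V × Finset V) ∈ (univ ×ˢ univ : Finset (Finset V × Finset V)) := by
      simp
    rw [← Finset.add_sum_erase _ _ h0]
    have h1 : f ∅ ∅ = 1 := by simp [hf]
    have h2 : ∑ p ∈ ((univ ×ˢ univ : Finset (Finset V × Finset V)).erase (∅, ∅)),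
        f p.1 p.2 = 0 := by
      refine Finset.sum_involution (fun p _ => p.swap) ?_ ?_ ?_ ?_
      · intro p _
        show f p.1 p.2 + f p.2 p.1 = 0
        rw [hsymm p.2 p.1]
        exact CharTwo.add_self_eq_zero _
      · rintro ⟨A, B⟩ hmem hp
        simp only [Prod.swap_prod_mk, ne_eq, Prod.mk.injEq, not_and]
        intro hBA hAB
        subst hBA
        exfalso
        have hcond : ∀ a ∈ B, ∀ b ∈ B, a ≠ b ∧ ¬ G.Adj a b := by
          by_contra hc
          simp only [hf, if_neg hc] at hp
          exact hp rfl
        have hA : B = ∅ := by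
          by_contra hA
          obtain ⟨a, ha⟩ := Finset.nonempty_iff_ne_empty.mpr hA
          exact (hcond a ha a ha).1 rfl
        subst hA
        exact (Finset.mem_erase.mp hmem).1 rfl
      · rintro ⟨A, B⟩ hmem
        simp only [Finset.mem_erase, Finset.mem_product, Finset.mem_univ, and_self,
          and_true, Prod.swap_prod_mk, ne_eq, Prod.mk.injEq, not_and] at hmem ⊢
        intro hB hA
        exact hmem hA hB
      · intro p _
        exact Prod.swap_swap p
    rw [h1, h2, add_zero]
  -- the pair count equals the number of dominating sets mod 2
  have key : ((univ.filter (IsDomSet G)).card : ZMod 2)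
      = ∑ p ∈ (univ ×ˢ univ : Finset (Finset V × Finset V)), f p.1 p.2 := by
    rw [Finset.sum_product, Finset.card_filter]
    push_cast
    refine Finset.sum_congr rfl fun A _ => ?_
    set botA : Finset V := univ.filter (fun v => ∀ a ∈ A, a ≠ v ∧ ¬ G.Adj a v) with hbotA
    have hBsub : ∀ B : Finset V,
        (∀ a ∈ A, ∀ b ∈ B, a ≠ b ∧ ¬ G.Adj a b) ↔ B ⊆ botA := by
      intro B
      constructor
      · intro h b hb
        simp only [hbotA, Finset.mem_filter, Finset.mem_univ, true_and]
        intro a ha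
        exact h a ha b hb
      · intro h a ha b hb
        have := h hb
        simp only [hbotA, Finset.mem_filter, Finset.mem_univ, true_and] at this
        exact this a ha
    have hsum : ∑ B : Finset V, f A B = ((2 ^ botA.card : ℕ) : ZMod 2) := by
      have : ∑ B : Finset V, f A B
          = ((univ.filter (fun B : Finset V => B ⊆ botA)).card : ZMod 2) := by
        rw [Finset.card_filter]
        push_cast
        refine Finset.sum_congr rfl fun B _ => ?_
        simp only [hf, hBsub B]
      rw [this]
      congr 1
      rw [← Finset.card_powerset]
      congr 1
      ext B
      simp [Finset.mem_powerset]
    rw [hsum]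
    by_cases hdom : IsDomSet G A
    · have hbe : botA = ∅ := by
        ext v
        simp only [hbotA, Finset.mem_filter, Finset.mem_univ, true_and,
          Finset.notMem_empty, iff_false, not_forall]
        rcases hdom v with hv | ⟨u, hu, hadj⟩
        · exact ⟨v, hv, by simp⟩
        · exact ⟨u, hu, by simp [hadj]⟩
      simp [hbe, hdom]
    · have hbne : botA.Nonempty := by
        by_contra hbe
        apply hdom
        intro v
        rw [Finset.not_nonempty_iff_eq_empty] at hbe
        have : v ∉ botA := by rw [hbe]; simp
        simp only [hbotA, Finset.mem_filter, Finset.mem_univ, true_and, not_forall] at this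
        obtain ⟨a, ha, hav⟩ := this
        rw [not_and_or, not_not, not_not] at hav
        rcases hav with h | h
        · subst h; exact Or.inl ha
        · exact Or.inr ⟨a, ha, h⟩
      obtain ⟨k, hk⟩ : ∃ k, botA.card = k + 1 :=
        ⟨botA.card - 1, by have := Finset.card_pos.mpr hbne; omega⟩ 
      have hz : ((2 ^ botA.card : ℕ) : ZMod 2) = 0 := by
        rw [ZMod.natCast_eq_zero_iff, hk]
        exact dvd_pow_self 2 (Nat.succ_ne_zero k)
      rw [if_neg hdom, hz]
  rw [hpair] at key
  rw [Nat.odd_iff]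
  by_contra h
  have h2 : 2 ∣ (univ.filter (IsDomSet G)).card := by omega
  rw [(ZMod.natCast_eq_zero_iff _ 2).mpr h2] at key
  exact one_ne_zero key.symm


/-- For a finite graph with at least one vertex, the domination polynomial
evaluated at `1` equals the number of dominating sets, and this value is odd. -/
theorem domination_poly_at_one {V : Type*} [Fintype V] [DecidableEq V] [Nonempty V]
    (G : SimpleGraph V) [DecidableRel G.Adj] :
    (∑ S ∈ Finset.univ.filter (IsDomSet G), (1 : ℤ) ^ S.card =
      (Finset.univ.filter (IsDomSet G)).card) ∧
    Odd (∑ S ∈ Finset.univ.filter (IsDomSet G), (1 : ℤ) ^ S.card) := by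
  have h : ∑ S ∈ Finset.univ.filter (IsDomSet G), (1 : ℤ) ^ S.card =
      (Finset.univ.filter (IsDomSet G)).card := by
    simp
  refine ⟨h, ?_⟩
  rw [h, Int.odd_coe_nat]
  exact dom_card_odd G
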